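/- Soundness of the DSL axiom system: every DSL formula derivable in the DSL axiom system is valid, i.e., it is satisfied at every world of every DSL model. -/

import Mathlib

namespace DSLPaper

/-- DSL formulae over a set `P` of propositional letters and `k` components. -/
inductive Formula (P : Type) (k : ℕ) : Type
  | atom : P → Formula P k
  | falsum : Formula P k
  | neg : Formula P k → Formula P k
  | conj : Formula P k → Formula P k → Formula P k
  | loc : Fin k → Formula P k → Formula P k

variable {P : Type} {k : ℕ}

/-- Material implication `F → G`, defined from `neg` and `conj`. -/
def Formula.impl (F G : Formula P k) : Formula P k := .neg (.conj F (.neg G))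

/-- Bi-implication `F ↔ G`. -/
def Formula.biimpl (F G : Formula P k) : Formula P k := .conj (F.impl G) (G.impl F)

/-- Disjunction `F ∨ F'`, abbreviating `∼(∼F ∧ ∼F')`. -/
def Formula.disj (F G : Formula P k) : Formula P k := .neg (.conj (.neg F) (.neg G))

/-- `⊤ = ∼⊥`. -/
def Formula.top : Formula P k := .neg .falsum

/-- The dual modality `m̄ᵢ F = ∼ mᵢ ∼F`. -/
def Formula.bar (i : Fin k) (F : Formula P k) : Formula P k := .neg (.loc i (.neg F))

/-- A Boolean valuation on formulae respecting the propositional connectives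
(atoms and located formulae are treated as opaque atoms). -/
def RespectsProp (v : Formula P k → Bool) : Prop :=
  v .falsum = false ∧ (∀ F : Formula P k, v (.neg F) = !v F) ∧
    (∀ F G : Formula P k, v (.conj F G) = (v F && v G))

/-- Propositional tautologies: true under every valuation respecting the connectives. -/
def Tautology (F : Formula P k) : Prop :=
  ∀ v : Formula P k → Bool, RespectsProp v → v F = true

/-- Derivability in the DSL axiom system: propositional tautologies (PC), axiom K,
axiom DSL1, axiom DSL2 (for distinct location operators), modus ponens, necessitation. -/
inductive Derivable : Formula P k → Prop
  | taut {F : Formula P k} : Tautology F → Derivable F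
  | axK (i : Fin k) (F G : Formula P k) :
      Derivable (((F.impl G).bar i).impl ((F.bar i).impl (G.bar i)))
  | dsl1 (i : Fin k) (F : Formula P k) :
      Derivable (((F.bar i).biimpl F).bar i)
  | dsl2 (i j : Fin k) : i ≠ j → Derivable ((Formula.falsum.bar j).bar i)
  | mp {F G : Formula P k} : Derivable F → Derivable (F.impl G) → Derivable G
  | nec (i : Fin k) {F : Formula P k} : Derivable F → Derivable (F.bar i)

/-- A DSL model `(W, R₁, …, R_k, V)` whose reachability relations satisfy the
three conditions (1)–(3). -/
structure Model (P : Type) (k : ℕ) where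
  W : Type
  R : Fin k → W → W → Prop
  V : W → Set P
  cond1 : ∀ i u v, R i u v → R i v v
  cond2 : ∀ i u v w, R i u v → R i v w → v = w
  cond3 : ∀ i u v, R i u v → ∀ j, j ≠ i → ∀ w, ¬ R j v w

/-- Satisfaction of a DSL formula at a world of a DSL model. -/
def Sat (M : Model P k) : M.W → Formula P k → Prop
  | u, .atom p => p ∈ M.V u
  | _, .falsum => False
  | u, .neg F => ¬ Sat M u F
  | u, .conj F G => Sat M u F ∧ Sat M u G
  | u, .loc i F => ∃ v, M.R i u v ∧ Sat M v F

open Classical in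
lemma taut_sound (F : Formula P k) (hF : Tautology F) (M : Model P k) (u : M.W) :
    Sat M u F := by
  classical
  have hr : RespectsProp (fun G : Formula P k => decide (Sat M u G)) := by
    refine ⟨decide_eq_false (fun h => h), fun F => ?_, fun F G => ?_⟩
    · beta_reduce; by_cases h : Sat M u F
      · rw [decide_eq_true h]; exact decide_eq_false (fun h' => h' h)
      · rw [decide_eq_false h]; exact decide_eq_true h
    · beta_reduce; by_cases h : Sat M u F <;> by_cases h2 : Sat M u G
      · rw [decide_eq_true h, decide_eq_true h2]; exact decide_eq_true ⟨h, h2⟩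
      · rw [decide_eq_true h, decide_eq_false h2]; exact decide_eq_false (fun h' => h2 h'.2)
      · rw [decide_eq_false h, decide_eq_true h2]; exact decide_eq_false (fun h' => h h'.1)
      · rw [decide_eq_false h, decide_eq_false h2]; exact decide_eq_false (fun h' => h h'.1)
  have := hF _ hr
  simpa using this

lemma sat_impl {M : Model P k} {u : M.W} {F G : Formula P k} :
    Sat M u (F.impl G) ↔ (Sat M u F → Sat M u G) := by
  simp [Formula.impl, Sat]

lemma sat_bar {M : Model P k} {u : M.W} {i : Fin k} {F : Formula P k} :
    Sat M u (F.bar i) ↔ ∀ v, M.R i u v → Sat M v F := by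
  simp [Formula.bar, Sat]

/-- Soundness of the DSL axiom system: every derivable DSL formula is satisfied at
every world of every DSL model. -/
theorem dsl_soundness {P : Type} [Countable P] {k : ℕ} (F : Formula P k)
    (h : Derivable F) : ∀ (M : Model P k) (u : M.W), Sat M u F := by
  induction h with
  | taut ht => exact taut_sound _ ht
  | axK i F G =>
      intro M u
      rw [sat_impl, sat_impl]
      intro h1 h2
      rw [sat_bar] at *
      intro v hv
      exact sat_impl.mp (h1 v hv) (h2 v hv)
  | dsl1 i F =>
      intro M u
      rw [sat_bar]
      intro v hv
      have hvv : M.R i v v := M.cond1 i u v hv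
      have huniq : ∀ w, M.R i v w → v = w := fun w hw => M.cond2 i u v w hv hw
      have : Sat M v (F.bar i) ↔ Sat M v F := by
        rw [sat_bar]
        constructor
        · intro h; exact h v hvv
        · intro h w hw; rwa [← huniq w hw]
      simp only [Formula.biimpl]
      exact ⟨sat_impl.mpr this.mp, sat_impl.mpr this.mpr⟩
  | dsl2 i j hij =>
      intro M u
      rw [sat_bar]
      intro v hv
      rw [sat_bar]
      intro w hw
      exact absurd hw (M.cond3 i u v hv j (Ne.symm hij) w)
  | mp hF hFG ihF ihFG =>
      intro M u
      exact sat_impl.mp (ihFG M u) (ihF M u)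
  | nec i hF ihF =>
      intro M u
      rw [sat_bar]
      intro v _
      exact ihF M v

end DSLPaper
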